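/- arXiv:2104.00827 — 3 statements merged into one kernel-verified Lean document; each statement's English description precedes it below -/
import Mathlib

section
/- With p = 1 + τ√(g/ℓ) and q = 1 + τ√(g/(ℓ−ℓ₀)) for small ℓ₀ ∈ (0, ℓ), the robustness lower bound satisfies |(pq − 1)/(p − q)| ≥ C/ℓ₀ for some constant C > 0 depending only on τ, g, ℓ, for all ℓ₀ in (0, ℓ/2). -/
set_option maxHeartbeats 1600000


/-- With `p = 1 + τ√(g/ℓ)` and `q = 1 + τ√(g/(ℓ - ℓ₀))`, the robustness lower bound
`|(pq - 1)/(p - q)|` is at least `C/ℓ₀` for some constant `C > 0` depending only on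
`τ, g, ℓ`, uniformly over fixation points `ℓ₀ ∈ (0, ℓ/2)`. -/
theorem cartpole_robustness_bound (τ g ℓ : ℝ) (hτ : 0 < τ) (hg : 0 < g) (hℓ : 0 < ℓ) :
    ∃ C > (0 : ℝ), ∀ ℓ₀ ∈ Set.Ioo (0 : ℝ) (ℓ / 2),
      |((1 + τ * Real.sqrt (g / ℓ)) * (1 + τ * Real.sqrt (g / (ℓ - ℓ₀))) - 1) /
        ((1 + τ * Real.sqrt (g / ℓ)) - (1 + τ * Real.sqrt (g / (ℓ - ℓ₀))))| ≥ C / ℓ₀ := by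
  refine ⟨ℓ, hℓ, ?_⟩
  rintro ℓ₀ ⟨h0, h1⟩
  have hℓ₀ℓ : (0:ℝ) < ℓ - ℓ₀ := by linarith
  set a := Real.sqrt (g / ℓ) with ha_def
  set b := Real.sqrt (g / (ℓ - ℓ₀)) with hb_def
  have ha : 0 < a := Real.sqrt_pos.mpr (div_pos hg hℓ)
  have hb : 0 < b := Real.sqrt_pos.mpr (div_pos hg hℓ₀ℓ)
  have ha2 : a ^ 2 = g / ℓ := Real.sq_sqrt (le_of_lt (div_pos hg hℓ))
  have hb2 : b ^ 2 = g / (ℓ - ℓ₀) := Real.sq_sqrt (le_of_lt (div_pos hg hℓ₀ℓ))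
  have hab : a < b := by
    apply Real.sqrt_lt_sqrt (le_of_lt (div_pos hg hℓ))
    exact div_lt_div_of_pos_left hg hℓ₀ℓ (by linarith)
  -- key identity
  have hkey : (b - a) * (b + a) = g * ℓ₀ / (ℓ * (ℓ - ℓ₀)) := by
    have h : (b - a) * (b + a) = b ^ 2 - a ^ 2 := by ring
    rw [h, ha2, hb2]
    field_simp
    ring
  -- bound b - a ≤ g*ℓ₀/(ℓ^2*a)
  have hba : b - a ≤ g * ℓ₀ / (ℓ ^ 2 * a) := by
    have hsum : ℓ ^ 2 * a ≤ ℓ * (ℓ - ℓ₀) * (b + a) := by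
      have h1 : ℓ * (ℓ / 2) ≤ ℓ * (ℓ - ℓ₀) := by nlinarith
      have h2 : 2 * a ≤ b + a := by linarith
      nlinarith
    have hpos : (0:ℝ) < ℓ ^ 2 * a := by positivity
    have hpos2 : (0:ℝ) < ℓ * (ℓ - ℓ₀) * (b + a) := by positivity
    have : (b - a) * (ℓ ^ 2 * a) ≤ g * ℓ₀ := by
      have h3 : (b - a) * (ℓ * (ℓ - ℓ₀) * (b + a)) = g * ℓ₀ := by
        have := hkey
        field_simp at this ⊢
        nlinarith [this]
      nlinarith [hab, hsum]
    rw [div_eq_mul_inv]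
    rw [← le_div_iff₀ hpos] at this
    simpa [div_eq_mul_inv] using this
  -- numerator and denominator
  have hnum : (1 + τ * a) * (1 + τ * b) - 1 = τ * a + τ * b + τ ^ 2 * (a * b) := by ring
  have hden : (1 + τ * a) - (1 + τ * b) = -(τ * (b - a)) := by ring
  have hnum_ge : τ * a ≤ |(1 + τ * a) * (1 + τ * b) - 1| := by
    rw [hnum, abs_of_nonneg (by positivity)]
    nlinarith [mul_pos hτ hb, mul_pos (mul_pos hτ hτ) (mul_pos ha hb)]
  have hden_pos : 0 < |(1 + τ * a) - (1 + τ * b)| := by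
    rw [hden, abs_neg, abs_of_nonneg (by nlinarith)]
    nlinarith
  have hden_le : |(1 + τ * a) - (1 + τ * b)| ≤ τ * (g * ℓ₀ / (ℓ ^ 2 * a)) := by
    rw [hden, abs_neg, abs_of_nonneg (by nlinarith)]
    have := mul_le_mul_of_nonneg_left hba (le_of_lt hτ)
    linarith
  have hstep : (τ * a) / (τ * (g * ℓ₀ / (ℓ ^ 2 * a))) ≤
      |(1 + τ * a) * (1 + τ * b) - 1| / |(1 + τ * a) - (1 + τ * b)| := by
    apply div_le_div₀ (abs_nonneg _) hnum_ge hden_pos hden_le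
  have heq : (τ * a) / (τ * (g * ℓ₀ / (ℓ ^ 2 * a))) = ℓ / ℓ₀ := by
    have haℓ : a ^ 2 * ℓ = g := by
      rw [ha2]; field_simp
    have hℓ' : ℓ ≠ 0 := ne_of_gt hℓ
    have ha' : a ≠ 0 := ne_of_gt ha
    have hτ' : τ ≠ 0 := ne_of_gt hτ
    have hℓ₀' : ℓ₀ ≠ 0 := ne_of_gt h0
    have hg' : g ≠ 0 := ne_of_gt hg
    rw [← haℓ]
    have h1 : a ^ 2 * ℓ * ℓ₀ / (ℓ ^ 2 * a) = a * ℓ₀ / ℓ := by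
      rw [div_eq_div_iff (by positivity) hℓ']
      ring
    rw [h1, div_eq_div_iff (by positivity) hℓ₀']
    have h2 : ℓ * (τ * (a * ℓ₀ / ℓ)) = τ * (a * ℓ₀) * (ℓ / ℓ) := by ring
    rw [h2, div_self hℓ', mul_one]
    ring
  rw [ge_iff_le, abs_div]
  exact heq ▸ hstep
end

section
/- Suppose T is holomorphic on {|ζ| > 1}, continuous and bounded on {|ζ| ≥ 1}, and T(p) = 1 for some p with |p| > 1, and T(q) = 0 for some q with |q| > 1, with p, q real and p ≠ q. Then sup_{|ζ|=1} |T(ζ)| ≥ |(pq − 1)/(p − q)|. -/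
open Metric Set Filter Topology

/-- Single pole/zero robustness limit: if `T` is holomorphic on `{|ζ| > 1}`, continuous
and bounded on `{|ζ| ≥ 1}`, with `T p = 1` and `T q = 0` for real `p, q` of modulus
greater than one, `p ≠ q`, then the sup of `|T|` on the unit circle is at least
`|(pq - 1)/(p - q)|`. -/
theorem single_pole_zero_robustness_bound (T : ℂ → ℂ) (p q : ℝ)
    (hd : DifferentiableOn ℂ T {ζ : ℂ | 1 < ‖ζ‖})
    (hc : ContinuousOn T {ζ : ℂ | 1 ≤ ‖ζ‖})
    (hb : ∃ M : ℝ, ∀ ζ : ℂ, 1 ≤ ‖ζ‖ → ‖T ζ‖ ≤ M)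
    (hp : 1 < |p|) (hq : 1 < |q|) (hpq : p ≠ q)
    (hTp : T (p : ℂ) = 1) (hTq : T (q : ℂ) = 0) :
    sSup ((fun ζ => ‖T ζ‖) '' {ζ : ℂ | ‖ζ‖ = 1}) ≥ |(p * q - 1) / (p - q)| := by
  obtain ⟨M, hM⟩ := hb
  set S := (fun ζ => ‖T ζ‖) '' {ζ : ℂ | ‖ζ‖ = 1} with hSdef
  have hSbdd : BddAbove S := by
    refine ⟨max M 0, ?_⟩
    rintro x ⟨ζ, hζ, rfl⟩
    exact le_max_of_le_left (hM ζ hζ.ge)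
  -- basic facts about p, q
  have hp0 : p ≠ 0 := fun h => by simp [h] at hp; linarith
  have hq0 : q ≠ 0 := fun h => by simp [h] at hq; linarith
  have hpC : (p : ℂ) ≠ 0 := by exact_mod_cast hp0
  have hqC : (q : ℂ) ≠ 0 := by exact_mod_cast hq0
  set a : ℂ := (p : ℂ)⁻¹ with hadef
  set b : ℂ := (q : ℂ)⁻¹ with hbdef
  have ha0 : a ≠ 0 := inv_ne_zero hpC
  have hb0 : b ≠ 0 := inv_ne_zero hqC
  have haabs : ‖a‖ < 1 := by
    rw [hadef, norm_inv, Complex.norm_real, Real.norm_eq_abs]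
    exact inv_lt_one_of_one_lt₀ hp
  have hbabs : ‖b‖ < 1 := by
    rw [hbdef, norm_inv, Complex.norm_real, Real.norm_eq_abs]
    exact inv_lt_one_of_one_lt₀ hq
  have hab : a ≠ b := by
    intro h
    apply hpq
    have := congrArg (·⁻¹) h
    simp only [hadef, hbdef, inv_inv] at this
    exact_mod_cast this
  have haball : a ∈ ball (0 : ℂ) 1 := by
    simpa [Complex.dist_eq] using haabs
  have hbball : b ∈ ball (0 : ℂ) 1 := by
    simpa [Complex.dist_eq] using hbabs
  -- F z = z * T z⁻¹, with F 0 = 0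
  set F : ℂ → ℂ := fun z => z * T z⁻¹ with hFdef
  have hF0 : F 0 = 0 := by simp [hFdef]
  have hFd : DifferentiableOn ℂ F (ball (0 : ℂ) 1) := by
    refine (Complex.differentiableOn_compl_singleton_and_continuousAt_iff
      (Metric.ball_mem_nhds 0 one_pos)).1 ⟨?_, ?_⟩
    · refine DifferentiableOn.mul differentiableOn_id ?_
      refine hd.comp (DifferentiableOn.inv differentiableOn_id ?_) ?_
      · rintro z ⟨_, hz0⟩
        simpa using hz0
      · rintro z ⟨hz1, hz0⟩
        have hz0' : z ≠ 0 := by simpa using hz0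
        have hza : 0 < ‖z‖ := by
          simpa [norm_pos_iff] using hz0'
        have hzb : ‖z‖ < 1 := by
          simpa [Complex.dist_eq] using hz1
        simp only [mem_setOf_eq, norm_inv]
        exact (one_lt_inv₀ hza).2 hzb
    · have h0 : F 0 = 0 := hF0
      rw [ContinuousAt, h0]
      refine squeeze_zero_norm' (a := fun z : ℂ => ‖z‖ * max M 0) ?_ ?_
      · filter_upwards [Metric.ball_mem_nhds (0 : ℂ) one_pos] with z hz
        rcases eq_or_ne z 0 with rfl | hz0
        · simp [hF0, mul_nonneg, le_max_right]
        · have hza : 0 < ‖z‖ := by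
            simpa [norm_pos_iff] using hz0
          have hzb : ‖z‖ < 1 := by
            simpa [Complex.dist_eq] using hz
          have h1 : 1 ≤ ‖z⁻¹‖ := by
            rw [norm_inv]
            exact le_of_lt ((one_lt_inv₀ hza).2 hzb)
          calc ‖F z‖ = ‖z‖ * ‖T z⁻¹‖ := norm_mul _ _
            _ ≤ ‖z‖ * max M 0 :=
              mul_le_mul_of_nonneg_left (le_max_of_le_left (hM _ h1)) (norm_nonneg z)
      · simpa using tendsto_norm_zero.mul_const (max M 0)
  -- f₀ = holomorphic extension of z ↦ T z⁻¹
  set f₀ : ℂ → ℂ := dslope F 0 with hf₀def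
  have hf₀d : DifferentiableOn ℂ f₀ (ball (0 : ℂ) 1) :=
    (Complex.differentiableOn_dslope (Metric.ball_mem_nhds 0 one_pos)).2 hFd
  have hf₀eq : ∀ z : ℂ, z ≠ 0 → f₀ z = T z⁻¹ := by
    intro z hz
    rw [hf₀def, dslope_of_ne F hz, slope_def_field, hF0, hFdef]
    field_simp
    ring
  have hf₀b : f₀ b = 0 := by
    rw [hf₀eq b hb0, hbdef, inv_inv, hTq]
  -- h = (f₀ / Blaschke) ... h z = dslope f₀ b z * (1 - z b)
  set h : ℂ → ℂ := fun z => dslope f₀ b z * (1 - z * b) with hhdef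
  have hhd : DifferentiableOn ℂ h (ball (0 : ℂ) 1) := by
    refine DifferentiableOn.mul ?_ ?_
    · exact (Complex.differentiableOn_dslope (isOpen_ball.mem_nhds hbball)).2 hf₀d
    · exact (differentiableOn_const 1).sub (differentiableOn_id.mul (differentiableOn_const b))
  have hheq : ∀ z : ℂ, z ≠ b → z ≠ 0 → h z = T z⁻¹ * (1 - z * b) / (z - b) := by
    intro z hzb hz0
    rw [hhdef]
    simp only
    rw [dslope_of_ne f₀ hzb, slope_def_field, hf₀b, hf₀eq z hz0]
    rw [sub_zero, div_mul_eq_mul_div]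
  -- continuity of h on the closed ball
  have hhc : ContinuousOn h (closedBall (0 : ℂ) 1) := by
    intro z hz
    have hz1 : ‖z‖ ≤ 1 := by
      simpa [Complex.dist_eq] using (mem_closedBall.1 hz)
    rcases lt_or_eq_of_le hz1 with hlt | heq
    · have hzball : z ∈ ball (0 : ℂ) 1 := by simpa [Complex.dist_eq] using hlt
      exact ((hhd.differentiableAt (isOpen_ball.mem_nhds hzball)).continuousAt).continuousWithinAt
    · -- |z| = 1
      have hz0 : z ≠ 0 := by
        intro h0; rw [h0] at heq; simp at heq
      have hzb : z ≠ b := by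
        intro h0; rw [h0] at heq; exact (ne_of_lt hbabs) heq
      have hzinv : ‖z⁻¹‖ = 1 := by rw [norm_inv, heq, inv_one]
      set G : ℂ → ℂ := fun w => T w⁻¹ * (1 - w * b) / (w - b) with hGdef
      have hTinv : ContinuousWithinAt (fun w : ℂ => T w⁻¹) (closedBall (0 : ℂ) 1) z := by
        rw [← continuousWithinAt_inter (compl_singleton_mem_nhds hz0)]
        refine ContinuousWithinAt.comp (hc z⁻¹ (by simp [hzinv])) ?_ ?_
        · exact (continuousAt_inv₀ hz0).continuousWithinAt
        · rintro w ⟨hw1, hw0⟩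
          have hw0' : w ≠ 0 := by simpa using hw0
          have hwa : 0 < ‖w‖ := by
            simpa [norm_pos_iff] using hw0'
          have hwb : ‖w‖ ≤ 1 := by
            simpa [Complex.dist_eq] using (mem_closedBall.1 hw1)
          simp only [mem_setOf_eq, norm_inv]
          exact (one_le_inv₀ hwa).2 hwb
      have hGW : ContinuousWithinAt G (closedBall (0 : ℂ) 1) z := by
        refine ContinuousWithinAt.div ?_ ?_ (sub_ne_zero.2 hzb)
        · exact hTinv.mul
            ((continuous_const.sub (continuous_id.mul continuous_const)).continuousWithinAt)
        · exact ((continuous_id.sub continuous_const).continuousWithinAt)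
      refine hGW.congr_of_eventuallyEq ?_ (hheq z hzb hz0)
      have hopen : IsOpen ({b}ᶜ ∩ {(0 : ℂ)}ᶜ : Set ℂ) :=
        (isOpen_compl_singleton.inter isOpen_compl_singleton)
      have hmem : ({b}ᶜ ∩ {(0 : ℂ)}ᶜ : Set ℂ) ∈ 𝓝[closedBall (0 : ℂ) 1] z :=
        mem_nhdsWithin_of_mem_nhds (hopen.mem_nhds ⟨hzb, hz0⟩)
      filter_upwards [hmem] with w hw
      exact hheq w hw.1 hw.2
  have hdc : DiffContOnCl ℂ h (ball (0 : ℂ) 1) :=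
    ⟨hhd, by rwa [closure_ball (0 : ℂ) one_ne_zero]⟩
  -- boundary bound
  have hbound : ∀ w ∈ frontier (ball (0 : ℂ) 1), ‖h w‖ ≤ sSup S := by
    intro w hw
    rw [frontier_ball (0 : ℂ) one_ne_zero] at hw
    have hw1 : ‖w‖ = 1 := by
      simpa [Complex.dist_eq] using (mem_sphere.1 hw)
    have hw0 : w ≠ 0 := by intro h0; rw [h0] at hw1; simp at hw1
    have hwb : w ≠ b := by
      intro h0; rw [h0] at hw1; exact absurd hw1 (ne_of_lt hbabs)
    have hbconj : (starRingEnd ℂ) b = b := by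
      rw [hbdef, map_inv₀, Complex.conj_ofReal]
    have key : (1 : ℂ) - w * b = w * (starRingEnd ℂ) (w - b) := by
      rw [map_sub, mul_sub, Complex.mul_conj, hbconj]
      norm_num
      rw [Complex.normSq_eq_norm_sq, hw1]
      norm_num
    have hnorm : ‖(1 : ℂ) - w * b‖ = ‖w - b‖ := by
      rw [key, norm_mul, hw1, one_mul, RCLike.norm_conj]
    rw [hheq w hwb hw0]
    have hwsub : ‖w - b‖ ≠ 0 := norm_ne_zero_iff.2 (sub_ne_zero.2 hwb)
    rw [norm_div, norm_mul, hnorm, mul_div_assoc, div_self hwsub, mul_one]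
    refine le_csSup hSbdd ⟨w⁻¹, ?_, rfl⟩
    simp [map_inv₀, hw1]
  -- apply maximum modulus principle at a
  have hfin : ‖h a‖ ≤ sSup S :=
    Complex.norm_le_of_forall_mem_frontier_norm_le isBounded_ball hdc hbound
      (subset_closure haball)
  -- compute h a
  have hval : h a = (((p * q - 1) / (q - p) : ℝ) : ℂ) := by
    rw [hheq a hab ha0, hadef, hbdef, inv_inv, hTp]
    have hqp : (q : ℝ) - p ≠ 0 := sub_ne_zero.2 (Ne.symm hpq)
    push_cast
    field_simp
  have habs : ‖h a‖ = |(p * q - 1) / (p - q)| := by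
    rw [hval, Complex.norm_real, Real.norm_eq_abs, abs_div, abs_div, abs_sub_comm q p]
  rw [ge_iff_le, ← habs]
  exact hfin
end

section
/- For the Euler-discretized linearized cartpole with output z = h + ℓ₀θ and 0 < ℓ₀ < ℓ, the transfer function from u to z has zeros at 1 ± τ√(g/(ℓ − ℓ₀)); in particular one zero lies strictly outside the unit disc (the system is non-minimum phase). When ℓ₀ = ℓ, the transfer function has no finite zeros. -/
private lemma cartpole_e0 : (finSumFinEquiv.symm (0 : Fin (4+1)) : Fin 4 ⊕ Fin 1) = Sum.inl 0 := by decide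
private lemma cartpole_e1 : (finSumFinEquiv.symm (1 : Fin (4+1)) : Fin 4 ⊕ Fin 1) = Sum.inl 1 := by decide
private lemma cartpole_e2 : (finSumFinEquiv.symm (2 : Fin (4+1)) : Fin 4 ⊕ Fin 1) = Sum.inl 2 := by decide
private lemma cartpole_e3 : (finSumFinEquiv.symm (3 : Fin (4+1)) : Fin 4 ⊕ Fin 1) = Sum.inl 3 := by decide
private lemma cartpole_e4 : (finSumFinEquiv.symm (4 : Fin (4+1)) : Fin 4 ⊕ Fin 1) = Sum.inr 0 := by decide

set_option maxHeartbeats 1000000 in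
private lemma cartpole_detR (M m ℓ g τ ℓ₀ ζ : ℝ) (hM : M ≠ 0) (hℓ : ℓ ≠ 0) :
    (Matrix.fromBlocks
      (ζ • (1 : Matrix (Fin 4) (Fin 4) ℝ) -
        (1 + τ • !![0, 1, 0, 0; 0, 0, -(m * g / M), 0; 0, 0, 0, 1; 0, 0, (M + m) * g / (M * ℓ), 0]))
      (-(!![0; τ * (1 / M); 0; τ * (-(1 / (M * ℓ)))]))
      (!![1, 0, ℓ₀, 0]) 0).det
    = τ^2/(M*ℓ) * ((ℓ-ℓ₀)*(ζ-1)^2 - g*τ^2) := by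
  rw [← Matrix.det_reindex_self finSumFinEquiv]
  have h : Matrix.reindex finSumFinEquiv finSumFinEquiv (Matrix.fromBlocks
      (ζ • (1 : Matrix (Fin 4) (Fin 4) ℝ) -
        (1 + τ • !![0, 1, 0, 0; 0, 0, -(m * g / M), 0; 0, 0, 0, 1; 0, 0, (M + m) * g / (M * ℓ), 0]))
      (-(!![0; τ * (1 / M); 0; τ * (-(1 / (M * ℓ)))]))
      (!![1, 0, ℓ₀, 0]) 0) =
      !![ζ-1, -τ, 0, 0, 0;
         0, ζ-1, τ*(m*g/M), 0, -(τ*(1/M));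
         0, 0, ζ-1, -τ, 0;
         0, 0, -(τ*((M+m)*g/(M*ℓ))), ζ-1, τ*(1/(M*ℓ));
         1, 0, ℓ₀, 0, 0] := by
    ext i j
    fin_cases i <;> fin_cases j <;>
      simp [Matrix.fromBlocks, cartpole_e0, cartpole_e1, cartpole_e2, cartpole_e3, cartpole_e4,
        Matrix.one_apply, Matrix.vecHead, Matrix.vecTail] <;> ring
  rw [h]
  simp [Matrix.det_succ_row_zero, Fin.sum_univ_succ, Fin.succAbove,
    Fin.castSucc, Fin.castAdd, Fin.castLE, Matrix.vecHead, Matrix.vecTail]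
  field_simp
  ring

/-- Zeros of the Euler-discretized linearized cartpole with output `z = h + ℓ₀ θ`,
characterized via the Rosenbrock system matrix `[[ζI - A, -B], [C, 0]]`: for
`0 < ℓ₀ < ℓ` the (invariant) zeros are exactly `1 ± τ√(g/(ℓ - ℓ₀))`, and the zero
`1 + τ√(g/(ℓ - ℓ₀))` lies strictly outside the unit disc (non-minimum phase); for
`ℓ₀ = ℓ` there are no finite zeros. -/
theorem cartpole_discrete_zeros (M m ℓ g τ ℓ₀ : ℝ)
    (hM : 0 < M) (hm : 0 < m) (hℓ : 0 < ℓ) (hg : 0 < g) (hτ : 0 < τ)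
    (hℓ₀ : 0 < ℓ₀) (hℓ₀ℓ : ℓ₀ ≤ ℓ) :
    let Ac : Matrix (Fin 4) (Fin 4) ℝ :=
      !![0, 1, 0, 0;
         0, 0, -(m * g / M), 0;
         0, 0, 0, 1;
         0, 0, (M + m) * g / (M * ℓ), 0]
    let A : Matrix (Fin 4) (Fin 4) ℝ := 1 + τ • Ac
    let B : Matrix (Fin 4) (Fin 1) ℝ := !![0; τ * (1 / M); 0; τ * (-(1 / (M * ℓ)))]
    let Cm : Matrix (Fin 1) (Fin 4) ℝ := !![1, 0, ℓ₀, 0]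
    let R : ℝ → Matrix (Fin 4 ⊕ Fin 1) (Fin 4 ⊕ Fin 1) ℝ :=
      fun ζ => Matrix.fromBlocks (ζ • (1 : Matrix (Fin 4) (Fin 4) ℝ) - A) (-B) Cm 0
    (ℓ₀ < ℓ →
      (∀ ζ : ℝ, (R ζ).det = 0 ↔
        ζ = 1 + τ * Real.sqrt (g / (ℓ - ℓ₀)) ∨ ζ = 1 - τ * Real.sqrt (g / (ℓ - ℓ₀))) ∧
      1 < |1 + τ * Real.sqrt (g / (ℓ - ℓ₀))|) ∧
    (ℓ₀ = ℓ → ∀ ζ : ℝ, (R ζ).det ≠ 0) := by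
  intro Ac A B Cm R
  have hdet : ∀ ζ : ℝ, (R ζ).det = τ^2/(M*ℓ) * ((ℓ-ℓ₀)*(ζ-1)^2 - g*τ^2) := by
    intro ζ
    simp only [R, A, Ac, B, Cm]
    exact cartpole_detR M m ℓ g τ ℓ₀ ζ hM.ne' hℓ.ne'
  have hcoef : (0:ℝ) < τ^2/(M*ℓ) := by positivity
  constructor
  · intro hlt
    set r := Real.sqrt (g / (ℓ - ℓ₀)) with hr
    have hdpos : 0 < ℓ - ℓ₀ := by linarith
    have hr2 : r^2 = g / (ℓ - ℓ₀) := Real.sq_sqrt (by positivity)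
    have hrpos : 0 < r := Real.sqrt_pos.mpr (by positivity)
    constructor
    · intro ζ
      rw [hdet ζ]
      have key : (ℓ-ℓ₀)*(ζ-1)^2 - g*τ^2
          = (ℓ-ℓ₀) * ((ζ - (1 + τ*r)) * (ζ - (1 - τ*r))) := by
        have : (ζ - (1 + τ*r)) * (ζ - (1 - τ*r)) = (ζ-1)^2 - τ^2 * r^2 := by ring
        rw [this, hr2]
        field_simp
      rw [key]
      rw [mul_eq_zero, mul_eq_zero]
      constructor
      · rintro (h | h | h)
        · exact absurd h hcoef.ne'
        · exact absurd h hdpos.ne'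
        · rcases mul_eq_zero.mp h with h | h
          · exact Or.inl (by linarith [sub_eq_zero.mp h])
          · exact Or.inr (by linarith [sub_eq_zero.mp h])
      · rintro (h | h)
        · exact Or.inr (Or.inr (by rw [h]; ring))
        · exact Or.inr (Or.inr (by rw [h]; ring))
    · have : 0 < τ * r := by positivity
      rw [abs_of_pos (by linarith)]
      linarith
  · intro heq ζ
    rw [hdet ζ, heq]
    have : τ^2/(M*ℓ) * ((ℓ-ℓ)*(ζ-1)^2 - g*τ^2) = τ^2/(M*ℓ) * (-(g*τ^2)) := by ring
    rw [this]
    have hneg : -(g*τ^2) < 0 := by nlinarith [sq_nonneg τ, mul_pos hg (mul_pos hτ hτ)]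
    exact (mul_neg_of_pos_of_neg hcoef hneg).ne
end
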